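/- If unit vectors v_1,...,v_m in R^n and positive weights a_1,...,a_m satisfy I_n = Σ a_j v_j ⊗ v_j, then the convex hull of {±v_1,...,±v_m} contains the ball (1/√n)·B_2^n. -/

import Mathlib

open RealInnerProductSpace Finset

theorem john_ball_in_symmetric_hull (n m : ℕ) (hn : 0 < n)
    (v : Fin m → EuclideanSpace ℝ (Fin n)) (a : Fin m → ℝ)
    (hv : ∀ j, ‖v j‖ = 1) (ha : ∀ j, 0 < a j)
    (hI : ∀ x : EuclideanSpace ℝ (Fin n), ∑ j, a j • ⟪v j, x⟫ • v j = x) :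
    Metric.closedBall (0 : EuclideanSpace ℝ (Fin n)) (1 / Real.sqrt n) ⊆
      convexHull ℝ (Set.range v ∪ Set.range (fun j => -v j)) := by
  classical
  have hm : 0 < m := by
    rcases Nat.eq_zero_or_pos m with hm0 | hm
    · exfalso
      subst hm0
      have h := hI (EuclideanSpace.single ⟨0, hn⟩ 1)
      simp at h
      have := congrArg (fun z => z ⟨0, hn⟩) h
      simp [EuclideanSpace.single_apply] at this
    · exact hm
  set b := EuclideanSpace.basisFun (Fin n) ℝ with hb
  -- trace identity
  have htr : ∑ j, a j = (n : ℝ) := by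
    have h1 : ∀ i, ∑ j, a j * (⟪v j, b i⟫ * ⟪v j, b i⟫) = 1 := by
      intro i
      have h := congrArg (fun z => ⟪z, (b i : EuclideanSpace ℝ (Fin n))⟫) (hI (b i))
      simp only [sum_inner, real_inner_smul_left] at h
      rw [real_inner_self_eq_norm_sq, b.orthonormal.1 i] at h
      simpa using h
    have h2 : ∀ j, ∑ i, ⟪v j, b i⟫ * ⟪v j, b i⟫ = 1 := by
      intro j
      have h := b.sum_inner_mul_inner (v j) (v j)
      rw [real_inner_self_eq_norm_sq, hv j, one_pow] at h
      rw [← h]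
      exact Finset.sum_congr rfl fun i _ => by rw [real_inner_comm (b i) (v j)]
    calc ∑ j, a j = ∑ j, a j * ∑ i, ⟪v j, b i⟫ * ⟪v j, b i⟫ :=
          Finset.sum_congr rfl fun j _ => by rw [h2 j, mul_one]
      _ = ∑ j, ∑ i, a j * (⟪v j, b i⟫ * ⟪v j, b i⟫) :=
          Finset.sum_congr rfl fun j _ => Finset.mul_sum _ _ _
      _ = ∑ i, ∑ j, a j * (⟪v j, b i⟫ * ⟪v j, b i⟫) := Finset.sum_comm
      _ = ∑ i : Fin n, (1 : ℝ) := Finset.sum_congr rfl fun i _ => h1 i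
      _ = (n : ℝ) := by simp
  intro x hx
  by_contra hxK
  have hSfin : (Set.range v ∪ Set.range fun j => -v j).Finite :=
    (Set.finite_range v).union (Set.finite_range _)
  obtain ⟨f, u, hfu, hux⟩ :=
    geometric_hahn_banach_closed_point (convex_convexHull ℝ _)
      (hSfin.isCompact_convexHull (𝕜 := ℝ)).isClosed hxK
  set y := (InnerProductSpace.toDual ℝ (EuclideanSpace ℝ (Fin n))).symm f with hy
  have hfy : ∀ z, f z = ⟪y, z⟫ := fun z =>
    (InnerProductSpace.toDual_symm_apply).symm
  have hvju : ∀ j, ⟪y, v j⟫ < u ∧ -⟪y, v j⟫ < u := by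
    intro j
    constructor
    · rw [← hfy]
      exact hfu _ (subset_convexHull ℝ _ (Or.inl ⟨j, rfl⟩))
    · have := hfu (-(v j)) (subset_convexHull ℝ _ (Or.inr ⟨j, rfl⟩))
      rw [hfy] at this
      simpa [inner_neg_right] using this
  have hupos : 0 < u := by
    obtain ⟨h1, h2⟩ := hvju ⟨0, hm⟩
    rcases le_or_gt 0 (⟪y, v ⟨0, hm⟩⟫) with h | h
    · linarith
    · linarith
  have hsq : ∀ j, ⟪y, v j⟫ * ⟪y, v j⟫ ≤ u * u := by
    intro j
    obtain ⟨h1, h2⟩ := hvju j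
    nlinarith
  have hny : ‖y‖ ^ 2 = ∑ j, a j * (⟪y, v j⟫ * ⟪y, v j⟫) := by
    have h := congrArg (fun z => ⟪y, z⟫) (hI y)
    simp only [inner_sum, real_inner_smul_right] at h
    rw [real_inner_self_eq_norm_sq] at h
    rw [← h]
    exact Finset.sum_congr rfl fun j _ => by rw [real_inner_comm y (v j)]
  have hbnd : ‖y‖ ^ 2 ≤ (n : ℝ) * (u * u) := by
    rw [hny, ← htr, Finset.sum_mul]
    exact Finset.sum_le_sum fun j _ =>
      mul_le_mul_of_nonneg_left (hsq j) (ha j).le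
  have hxnorm : ‖x‖ ≤ 1 / Real.sqrt n := by
    simpa [dist_eq_norm] using hx
  have hsn : 0 < Real.sqrt n := Real.sqrt_pos.mpr (by exact_mod_cast hn)
  have huy : u < ‖y‖ / Real.sqrt n := by
    have h1 : u < ⟪y, x⟫ := by rw [← hfy]; exact hux
    have h2 : ⟪y, x⟫ ≤ ‖y‖ * ‖x‖ := real_inner_le_norm y x
    have h3 : ‖y‖ * ‖x‖ ≤ ‖y‖ * (1 / Real.sqrt n) :=
      mul_le_mul_of_nonneg_left hxnorm (norm_nonneg y)
    rw [div_eq_mul_inv, ← one_div, mul_comm]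
    calc u < ⟪y, x⟫ := h1
      _ ≤ ‖y‖ * (1 / Real.sqrt n) := h2.trans h3
      _ = 1 / Real.sqrt n * ‖y‖ := by ring
  have husn : u * Real.sqrt n < ‖y‖ := by
    rw [← lt_div_iff₀ hsn] at *
    exact huy
  have hnn : Real.sqrt n * Real.sqrt n = (n : ℝ) :=
    Real.mul_self_sqrt (by positivity)
  have h4 : (u * Real.sqrt n) * (u * Real.sqrt n) < ‖y‖ * ‖y‖ :=
    mul_lt_mul' husn.le husn (by positivity) (lt_of_le_of_lt (by positivity) husn)
  nlinarith [h4, hbnd, hnn, pow_two ‖y‖]
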